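/- Fix an integer N ≥ 1 and reals a < b. Let j : ℝ^N → ℝ be continuously differentiable on a neighborhood of the cube [a,b]^N with j > 0 there; let h : ℝ → ℝ be continuously differentiable on a neighborhood of [a,b] with h(a) = h(b) = 0; for each 1 ≤ n ≤ N, let ψ_{n,θ} : ℝ^N → ℝ be continuously differentiable on a neighborhood of [a,b]^N, and set ψ_n(x) = (∂_{x_n} j(x))/j(x). Then (1/2)∫_{[a,b]^N} j(x) Σ_{n=1}^N (ψ_n(x) − ψ_{n,θ}(x))² h(x_n) dx = ∫_{[a,b]^N} j(x) Σ_{n=1}^N [(1/2)ψ_{n,θ}(x)² h(x_n) + ∂_{x_n}ψ_{n,θ}(x) h(x_n) + ψ_{n,θ}(x) h'(x_n)] dx + (1/2)∫_{[a,b]^N} j(x) Σ_{n=1}^N ψ_n(x)² h(x_n) dx. -/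

import Mathlib

open MeasureTheory

lemma pi_restrict_Icc (K : ℕ) (a b : ℝ) :
    (volume : Measure (Fin K → ℝ)).restrict (Set.univ.pi fun _ => Set.Icc a b) =
      Measure.pi (fun _ : Fin K => (volume : Measure ℝ).restrict (Set.Icc a b)) := by
  refine (Measure.pi_eq (μ := fun _ : Fin K => (volume : Measure ℝ).restrict (Set.Icc a b)) fun s hs => ?_).symm
  rw [Measure.restrict_apply (MeasurableSet.univ_pi hs), ← Set.pi_inter_distrib,
    volume_pi, Measure.pi_pi]
  simp [Measure.restrict_apply (hs _)]

/-- **Theorem (explicit WSM = implicit WSM + const on a cube, fixed number of points).**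
For an `m`-point Janossy density `j > 0`, continuously differentiable on a neighborhood
of the cube `[a,b]^m` (expressed via every partial derivative `Dj n` existing at each
point of the cube, together with continuity of `j` and `Dj n` on the cube), model
scores `ψ n` with partial derivatives `Dψ n = ∂_{x_n} ψ n`, and a weight `h`
vanishing at both endpoints of `[a,b]`, the explicit weighted score-matching loss
(with true scores `ψ_n = ∂_{x_n} j / j`) equals the implicit weighted score-matching
objective plus a term not depending on the model scores. -/
theorem wsm_cube_equivalence
    {m : ℕ} (hm : 1 ≤ m) {a b : ℝ} (hab : a < b)
    (j : (Fin m → ℝ) → ℝ) (Dj : Fin m → (Fin m → ℝ) → ℝ)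
    (ψ : Fin m → (Fin m → ℝ) → ℝ) (Dψ : Fin m → (Fin m → ℝ) → ℝ)
    (h hd : ℝ → ℝ)
    (hjpos : ∀ x ∈ Set.univ.pi (fun _ : Fin m => Set.Icc a b), 0 < j x)
    (hjc : ContinuousOn j (Set.univ.pi fun _ : Fin m => Set.Icc a b))
    (hDj : ∀ (n : Fin m), ∀ x ∈ Set.univ.pi (fun _ : Fin m => Set.Icc a b),
      HasDerivAt (fun u => j (Function.update x n u)) (Dj n x) (x n))
    (hDjc : ∀ n, ContinuousOn (Dj n) (Set.univ.pi fun _ : Fin m => Set.Icc a b))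
    (hψd : ∀ (n : Fin m), ∀ x ∈ Set.univ.pi (fun _ : Fin m => Set.Icc a b),
      HasDerivAt (fun u => ψ n (Function.update x n u)) (Dψ n x) (x n))
    (hψc : ∀ n, ContinuousOn (ψ n) (Set.univ.pi fun _ : Fin m => Set.Icc a b))
    (hDψc : ∀ n, ContinuousOn (Dψ n) (Set.univ.pi fun _ : Fin m => Set.Icc a b))
    (hhd : ∀ u ∈ Set.Icc a b, HasDerivAt h (hd u) u)
    (hhdc : ContinuousOn hd (Set.Icc a b))
    (hha : h a = 0) (hhb : h b = 0) :
    (1 / 2 : ℝ) * ∫ x in Set.univ.pi (fun _ : Fin m => Set.Icc a b),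
        j x * ∑ n, (Dj n x / j x - ψ n x) ^ 2 * h (x n)
      = (∫ x in Set.univ.pi (fun _ : Fin m => Set.Icc a b),
            j x * ∑ n, ((1 / 2) * ψ n x ^ 2 * h (x n) + Dψ n x * h (x n) +
              ψ n x * hd (x n)))
        + (1 / 2) * ∫ x in Set.univ.pi (fun _ : Fin m => Set.Icc a b),
            j x * ∑ n, (Dj n x / j x) ^ 2 * h (x n) := by
  obtain ⟨k, rfl⟩ := Nat.exists_eq_succ_of_ne_zero (Nat.one_le_iff_ne_zero.mp hm)
  set S : Set (Fin (k + 1) → ℝ) := Set.univ.pi fun _ => Set.Icc a b with hSdef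
  have hSm : MeasurableSet S := MeasurableSet.univ_pi fun _ => measurableSet_Icc
  have hSc : IsCompact S := isCompact_univ_pi fun _ => isCompact_Icc
  have hane : ∀ x ∈ S, j x ≠ 0 := fun x hx => (hjpos x hx).ne'
  have hh_cont : ContinuousOn h (Set.Icc a b) :=
    fun u hu => (hhd u hu).continuousAt.continuousWithinAt
  have heval : ∀ n : Fin (k + 1), ContinuousOn (fun x : Fin (k + 1) → ℝ => x n) S :=
    fun n => (continuous_apply n).continuousOn
  have hmaps : ∀ n : Fin (k + 1), Set.MapsTo (fun x : Fin (k + 1) → ℝ => x n) S (Set.Icc a b) :=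
    fun n x hx => hx n (Set.mem_univ n)
  have hhn : ∀ n, ContinuousOn (fun x : Fin (k + 1) → ℝ => h (x n)) S :=
    fun n => hh_cont.comp (heval n) (hmaps n)
  have hhdn : ∀ n, ContinuousOn (fun x : Fin (k + 1) → ℝ => hd (x n)) S :=
    fun n => hhdc.comp (heval n) (hmaps n)
  set G : Fin (k + 1) → (Fin (k + 1) → ℝ) → ℝ := fun n x =>
    Dj n x * ψ n x * h (x n) + j x * Dψ n x * h (x n) + j x * ψ n x * hd (x n) with hG
  have hGc : ∀ n, ContinuousOn (G n) S := fun n =>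
    ((((hDjc n).mul (hψc n)).mul (hhn n)).add ((hjc.mul (hDψc n)).mul (hhn n))).add
      ((hjc.mul (hψc n)).mul (hhdn n))
  have hGint : ∀ n, IntegrableOn (G n) S := fun n => (hGc n).integrableOn_compact hSc
  -- key integration-by-parts fact
  have key : ∀ n, (∫ x in S, G n x) = 0 := by
    intro n
    have inner : ∀ z : Fin k → ℝ, (∀ i, z i ∈ Set.Icc a b) →
        (∫ u in Set.Icc a b, G n (n.insertNth u z)) = 0 := by
      intro z hz
      have hmem : ∀ u ∈ Set.Icc a b, n.insertNth u z ∈ S := by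
        intro u hu i _
        rcases eq_or_ne i n with rfl | hne
        · simpa using hu
        · obtain ⟨l, hl⟩ := Fin.exists_succAbove_eq hne
          rw [← hl]
          simpa using hz l
      have hFder : ∀ u ∈ Set.uIcc a b, HasDerivAt
          (fun v => j (n.insertNth v z) * ψ n (n.insertNth v z) * h v)
          (G n (n.insertNth u z)) u := by
        intro u hu
        rw [Set.uIcc_of_le hab.le] at hu
        have hj' : HasDerivAt (fun v => j (n.insertNth v z)) (Dj n (n.insertNth u z)) u := by
          have := hDj n _ (hmem u hu)
          simpa only [Fin.update_insertNth, Fin.insertNth_apply_same] using this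
        have hψ' : HasDerivAt (fun v => ψ n (n.insertNth v z)) (Dψ n (n.insertNth u z)) u := by
          have := hψd n _ (hmem u hu)
          simpa only [Fin.update_insertNth, Fin.insertNth_apply_same] using this
        have hmul := (hj'.mul hψ').mul (hhd u hu)
        refine hmul.congr_deriv ?_
        simp only [hG, Fin.insertNth_apply_same, Pi.mul_apply]
        ring
      have hcont : ContinuousOn (fun u => G n (n.insertNth u z)) (Set.Icc a b) := by
        have hins : Continuous fun u : ℝ => n.insertNth (α := fun _ => ℝ) u z :=
          Continuous.finInsertNth (A := fun _ : Fin (k + 1) => ℝ) (g := fun _ : ℝ => z) n continuous_id continuous_const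
        exact (hGc n).comp hins.continuousOn (fun u hu => hmem u hu)
      have hFTC := intervalIntegral.integral_eq_sub_of_hasDerivAt hFder
        ((by rw [Set.uIcc_of_le hab.le]; exact hcont :
          ContinuousOn (fun u => G n (n.insertNth u z)) (Set.uIcc a b)).intervalIntegrable)
      rw [MeasureTheory.integral_Icc_eq_integral_Ioc, ← intervalIntegral.integral_of_le hab.le,
        hFTC]
      simp [hha, hhb]
    have hrestr : (volume : Measure (Fin (k + 1) → ℝ)).restrict S =
        Measure.pi (fun _ : Fin (k + 1) => (volume : Measure ℝ).restrict (Set.Icc a b)) := by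
      rw [hSdef]; exact pi_restrict_Icc (k + 1) a b
    set μ1 : Measure ℝ := volume.restrict (Set.Icc a b) with hμ1
    set μ2 : Measure (Fin k → ℝ) :=
      Measure.pi fun _ : Fin k => (volume : Measure ℝ).restrict (Set.Icc a b) with hμ2
    have hmp := (measurePreserving_piFinSuccAbove
      (fun _ : Fin (k + 1) => (volume : Measure ℝ).restrict (Set.Icc a b)) n).symm _
    have hsymm : ∀ p : ℝ × (Fin k → ℝ),
        (MeasurableEquiv.piFinSuccAbove (fun _ : Fin (k + 1) => ℝ) n).symm p =
          n.insertNth p.1 p.2 := by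
      intro p
      simp [MeasurableEquiv.piFinSuccAbove, Fin.insertNthEquiv]
    have hpiInt : Integrable (G n)
        (Measure.pi fun _ : Fin (k + 1) => (volume : Measure ℝ).restrict (Set.Icc a b)) := by
      rw [← hrestr]; exact hGint n
    have hint2 : Integrable (fun p : ℝ × (Fin k → ℝ) => G n (n.insertNth p.1 p.2))
        (μ1.prod μ2) := by
      have := (hmp.integrable_comp_emb (MeasurableEquiv.measurableEmbedding _)).mpr hpiInt
      refine this.congr (Filter.Eventually.of_forall fun p => ?_)
      simp [Function.comp, hsymm p]
    calc (∫ x in S, G n x)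
        = ∫ x, G n x ∂(Measure.pi fun _ : Fin (k + 1) =>
            (volume : Measure ℝ).restrict (Set.Icc a b)) := by rw [← hrestr]
      _ = ∫ p, G n (n.insertNth p.1 p.2) ∂(μ1.prod μ2) := by
          rw [← hmp.integral_comp (MeasurableEquiv.measurableEmbedding _)]
          exact integral_congr_ae (Filter.Eventually.of_forall fun p => congrArg (G n) (hsymm p))
      _ = ∫ u, ∫ z, G n (n.insertNth u z) ∂μ2 ∂μ1 := integral_prod _ hint2
      _ = ∫ z, ∫ u, G n (n.insertNth u z) ∂μ1 ∂μ2 := integral_integral_swap hint2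
      _ = 0 := by
          rw [hμ2, ← pi_restrict_Icc k a b]
          rw [setIntegral_congr_fun (MeasurableSet.univ_pi fun _ => measurableSet_Icc)
            (fun z hz => inner z (fun i => hz i (Set.mem_univ i)) :
              Set.EqOn (fun z => ∫ u, G n (n.insertNth u z) ∂μ1) 0
                (Set.univ.pi fun _ : Fin k => Set.Icc a b))]
          simp
  -- continuity and integrability of the three integrands
  have hf1c : ContinuousOn
      (fun x => j x * ∑ n, (Dj n x / j x - ψ n x) ^ 2 * h (x n)) S :=
    hjc.mul (continuousOn_finset_sum _ fun n _ =>
      ((((hDjc n).div hjc hane).sub (hψc n)).pow 2).mul (hhn n))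
  have hf2c : ContinuousOn
      (fun x => j x * ∑ n, ((1 / 2) * ψ n x ^ 2 * h (x n) + Dψ n x * h (x n) +
        ψ n x * hd (x n))) S :=
    hjc.mul (continuousOn_finset_sum _ fun n _ =>
      (((continuousOn_const.mul ((hψc n).pow 2)).mul (hhn n)).add
        ((hDψc n).mul (hhn n))).add ((hψc n).mul (hhdn n)))
  have hf3c : ContinuousOn
      (fun x => j x * ∑ n, (Dj n x / j x) ^ 2 * h (x n)) S :=
    hjc.mul (continuousOn_finset_sum _ fun n _ =>
      (((hDjc n).div hjc hane).pow 2).mul (hhn n))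
  have hf1i : IntegrableOn
      (fun x => j x * ∑ n, (Dj n x / j x - ψ n x) ^ 2 * h (x n)) S volume :=
    hf1c.integrableOn_compact hSc
  have hf2i : IntegrableOn
      (fun x => j x * ∑ n, ((1 / 2) * ψ n x ^ 2 * h (x n) + Dψ n x * h (x n) +
        ψ n x * hd (x n))) S volume :=
    hf2c.integrableOn_compact hSc
  have hf3i : IntegrableOn
      (fun x => j x * ∑ n, (Dj n x / j x) ^ 2 * h (x n)) S volume :=
    hf3c.integrableOn_compact hSc
  have hgi : IntegrableOn (fun x => ∑ n, G n x) S :=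
    integrable_finset_sum _ fun n _ => hGint n
  have hg0 : (∫ x in S, ∑ n, G n x) = 0 := by
    rw [integral_finset_sum _ fun n _ => hGint n]
    simp [key]
  -- pointwise identity
  have hptw : Set.EqOn
      (fun x => (1 / 2 : ℝ) * (j x * ∑ n, (Dj n x / j x - ψ n x) ^ 2 * h (x n)) +
        ∑ n, G n x)
      (fun x => (j x * ∑ n, ((1 / 2) * ψ n x ^ 2 * h (x n) + Dψ n x * h (x n) +
          ψ n x * hd (x n))) +
        (1 / 2 : ℝ) * (j x * ∑ n, (Dj n x / j x) ^ 2 * h (x n))) S := by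
    intro x hx
    have hjx := hane x hx
    simp only [hG, Finset.mul_sum, ← Finset.sum_add_distrib]
    refine Finset.sum_congr rfl fun n _ => ?_
    field_simp
    ring
  have hIeq := setIntegral_congr_fun (μ := (volume : Measure (Fin (k + 1) → ℝ))) hSm hptw
  rw [integral_add ((hf1i.const_mul _)) hgi, integral_add hf2i (hf3i.const_mul _),
    integral_const_mul, integral_const_mul] at hIeq
  linarith [hIeq, hg0]
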